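/- Let 0 < β < 2 and let g be continuous and bounded on a curved triangle T with apex at x_c, star-convex with respect to x_c, with curved side c : [0,1] → ℝ² (counterclockwise, c(t) ≠ x_c). For α > 0 with α(2-β) ≥ 1, the weakly singular integral ∫_T g(x)/‖x-x_c‖^β dx equals α ∫₀¹∫₀¹ g(φ_α(ξ,t)) ξ^{α(2-β)-1} ((c(t)-x_c)·c'⊥(t))/‖c(t)-x_c‖^β dξ dt, where φ_α(ξ,t) = x_c + ξ^α(c(t)-x_c), and the ξ-integrand is bounded. -/

import Mathlib

open MeasureTheory

/-- Dot product in the plane. -/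
def dot2 (a b : ℝ × ℝ) : ℝ := a.1 * b.1 + a.2 * b.2

/-- Rotation of a planar vector by `-π/2`. -/
def perp2 (v : ℝ × ℝ) : ℝ × ℝ := (v.2, -v.1)

lemma det_aux (w₁ w₂ : ℝ × ℝ) :
    (((ContinuousLinearMap.fst ℝ ℝ ℝ).smulRight w₁ +
      (ContinuousLinearMap.snd ℝ ℝ ℝ).smulRight w₂) : ℝ × ℝ →L[ℝ] ℝ × ℝ).det
      = w₁.1 * w₂.2 - w₂.1 * w₁.2 := by
  have : (((ContinuousLinearMap.fst ℝ ℝ ℝ).smulRight w₁ +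
      (ContinuousLinearMap.snd ℝ ℝ ℝ).smulRight w₂) : ℝ × ℝ →L[ℝ] ℝ × ℝ).det
      = LinearMap.det (((ContinuousLinearMap.fst ℝ ℝ ℝ).smulRight w₁ +
      (ContinuousLinearMap.snd ℝ ℝ ℝ).smulRight w₂) : ℝ × ℝ →ₗ[ℝ] ℝ × ℝ) := rfl
  rw [this, ← LinearMap.det_toMatrix (Module.Basis.finTwoProd ℝ), Matrix.det_fin_two]
  simp [LinearMap.toMatrix_apply, Module.Basis.finTwoProd_zero, Module.Basis.finTwoProd_one]

lemma deriv_aux (x_c : ℝ × ℝ) (c : ℝ → ℝ × ℝ) (α : ℝ) (hc : ContDiff ℝ 1 c)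
    (p : ℝ × ℝ) (hξ : p.1 ≠ 0) :
    HasFDerivAt (fun p : ℝ × ℝ => x_c + (p.1 ^ α) • (c p.2 - x_c))
      ((ContinuousLinearMap.fst ℝ ℝ ℝ).smulRight ((α * p.1 ^ (α - 1)) • (c p.2 - x_c)) +
       (ContinuousLinearMap.snd ℝ ℝ ℝ).smulRight (p.1 ^ α • deriv c p.2)) p := by
  have h1 : HasFDerivAt (fun q : ℝ × ℝ => q.1 ^ α)
      ((α * p.1 ^ (α - 1)) • (ContinuousLinearMap.fst ℝ ℝ ℝ)) p :=
    (Real.hasDerivAt_rpow_const (p := α) (Or.inl hξ)).comp_hasFDerivAt p hasFDerivAt_fst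
  have hcd : HasFDerivAt c ((1 : ℝ →L[ℝ] ℝ).smulRight (deriv c p.2)) p.2 :=
    ((hc.differentiable one_ne_zero) p.2).hasDerivAt.hasFDerivAt
  have h2 : HasFDerivAt (fun q : ℝ × ℝ => c q.2 - x_c)
      (((1 : ℝ →L[ℝ] ℝ).smulRight (deriv c p.2)).comp (ContinuousLinearMap.snd ℝ ℝ ℝ)) p :=
    (hcd.comp p hasFDerivAt_snd).sub_const x_c
  have h3 := (h1.smul h2).const_add x_c
  refine h3.congr_fderiv ?_
  ext u <;>
    simp [ContinuousLinearMap.smulRight_apply, Prod.smul_def, smul_smul]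

/-- The generalized scaled boundary parametrization
`φ_α(ξ,t) = x_c + ξ^α (c(t) - x_c)` transforms a weakly singular integral
`∫_T g(x)/‖x - x_c‖^β dx` (with `0 < β < 2`) into
`α ∫₀¹∫₀¹ g(φ_α(ξ,t)) ξ^{α(2-β)-1} ((c(t)-x_c)·c'⊥(t))/‖c(t)-x_c‖^β dξ dt`,
with the `ξ`-integrand bounded when `α(2-β) ≥ 1`. -/
theorem gsb_weakly_singular
    (T : Set (ℝ × ℝ)) (x_c : ℝ × ℝ) (c : ℝ → ℝ × ℝ) (g : ℝ × ℝ → ℝ)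
    (β α : ℝ) (hβ0 : 0 < β) (hβ2 : β < 2) (hα : 0 < α)
    (hαβ : 1 ≤ α * (2 - β))
    (hTmeas : MeasurableSet T)
    (hstar : StarConvex ℝ x_c T)
    (hc : ContDiff ℝ 1 c)
    (hcne : ∀ t ∈ Set.Icc (0:ℝ) 1, c t ≠ x_c)
    (hccw : ∀ t ∈ Set.Icc (0:ℝ) 1, 0 ≤ dot2 (c t - x_c) (perp2 (deriv c t)))
    (himage : (fun p : ℝ × ℝ => x_c + (p.1 ^ α) • (c p.2 - x_c)) ''
      (Set.Ioc (0:ℝ) 1 ×ˢ Set.Icc (0:ℝ) 1) = T \ {x_c})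
    (hinj : Set.InjOn (fun p : ℝ × ℝ => x_c + (p.1 ^ α) • (c p.2 - x_c))
      (Set.Ioc (0:ℝ) 1 ×ˢ Set.Icc (0:ℝ) 1))
    (hg : ContinuousOn g T) (hgbdd : ∃ M : ℝ, ∀ x ∈ T, |g x| ≤ M) :
    ((∫ x in T, g x / ‖x - x_c‖ ^ β) =
      α * ∫ t in (0:ℝ)..1, ∫ ξ in (0:ℝ)..1,
        g (x_c + (ξ ^ α) • (c t - x_c)) * ξ ^ (α * (2 - β) - 1) *
          (dot2 (c t - x_c) (perp2 (deriv c t)) / ‖c t - x_c‖ ^ β)) ∧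
    ∃ M : ℝ, ∀ ξ ∈ Set.Icc (0:ℝ) 1, ∀ t ∈ Set.Icc (0:ℝ) 1,
      |g (x_c + (ξ ^ α) • (c t - x_c)) * ξ ^ (α * (2 - β) - 1) *
        (dot2 (c t - x_c) (perp2 (deriv c t)) / ‖c t - x_c‖ ^ β)| ≤ M := by
  obtain ⟨M₀, hM₀⟩ := hgbdd
  set s : Set (ℝ × ℝ) := Set.Ioc (0:ℝ) 1 ×ˢ Set.Icc (0:ℝ) 1 with hs_def
  have hs_meas : MeasurableSet s := measurableSet_Ioc.prod measurableSet_Icc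
  set φ : ℝ × ℝ → ℝ × ℝ := fun p => x_c + (p.1 ^ α) • (c p.2 - x_c) with hφ_def
  -- the exponent
  set e : ℝ := α * (2 - β) - 1 with he_def
  have he0 : 0 ≤ e := by simp only [he_def]; linarith
  -- x_c ∈ T
  have hxc : x_c ∈ T := by
    have h10 : ((1:ℝ), (0:ℝ)) ∈ s := by
      constructor <;> simp
    have : φ (1, 0) ∈ T \ {x_c} := by
      rw [← himage]; exact Set.mem_image_of_mem _ h10
    exact hstar.mem ⟨_, this.1⟩
  -- φ maps [0,1]×[0,1] into T
  have hφT : ∀ ξ ∈ Set.Icc (0:ℝ) 1, ∀ t ∈ Set.Icc (0:ℝ) 1,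
      x_c + (ξ ^ α) • (c t - x_c) ∈ T := by
    intro ξ hξ t ht
    rcases eq_or_lt_of_le hξ.1 with h0 | h0
    · rw [← h0, Real.zero_rpow (ne_of_gt hα)]
      simpa using hxc
    · have : (ξ, t) ∈ s := ⟨⟨h0, hξ.2⟩, ht⟩
      have him : φ (ξ, t) ∈ T \ {x_c} := by
        rw [← himage]; exact Set.mem_image_of_mem _ this
      exact him.1
  -- M₀ is nonnegative
  have hM₀0 : 0 ≤ M₀ := (abs_nonneg _).trans (hM₀ x_c hxc)
  -- bound on the t-dependent factor
  have hnorm_pos : ∀ t ∈ Set.Icc (0:ℝ) 1, 0 < ‖c t - x_c‖ ^ β := by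
    intro t ht
    exact Real.rpow_pos_of_pos (norm_pos_iff.mpr (sub_ne_zero.mpr (hcne t ht))) β
  have hderivcont : Continuous (deriv c) := hc.continuous_deriv le_rfl
  have hQcont : ContinuousOn
      (fun t => dot2 (c t - x_c) (perp2 (deriv c t)) / ‖c t - x_c‖ ^ β)
      (Set.Icc (0:ℝ) 1) := by
    apply ContinuousOn.div
    · have hA : Continuous fun t => c t - x_c := hc.continuous.sub continuous_const
      have : Continuous fun t => dot2 (c t - x_c) (perp2 (deriv c t)) := by
        simp only [dot2, perp2]
        exact (hA.fst.mul hderivcont.snd).add (hA.snd.mul hderivcont.fst.neg)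
      exact this.continuousOn
    · exact (((hc.continuous.sub continuous_const).norm).continuousOn).rpow_const
        fun t ht => Or.inr (le_of_lt hβ0)
    · exact fun t ht => ne_of_gt (hnorm_pos t ht)
  obtain ⟨K, hK⟩ := isCompact_Icc.exists_bound_of_continuousOn hQcont
  have hK' : ∀ t ∈ Set.Icc (0:ℝ) 1,
      |dot2 (c t - x_c) (perp2 (deriv c t)) / ‖c t - x_c‖ ^ β| ≤ K := by
    intro t ht; simpa only [Real.norm_eq_abs] using hK t ht
  have hK0 : 0 ≤ K := (abs_nonneg _).trans (hK' 0 (by norm_num))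
  -- the boundedness claim
  have hbound : ∀ ξ ∈ Set.Icc (0:ℝ) 1, ∀ t ∈ Set.Icc (0:ℝ) 1,
      |g (x_c + (ξ ^ α) • (c t - x_c)) * ξ ^ e *
        (dot2 (c t - x_c) (perp2 (deriv c t)) / ‖c t - x_c‖ ^ β)| ≤ M₀ * K := by
    intro ξ hξ t ht
    rw [abs_mul, abs_mul]
    have h1 : |g (x_c + (ξ ^ α) • (c t - x_c))| ≤ M₀ := hM₀ _ (hφT ξ hξ t ht)
    have h2 : |ξ ^ e| ≤ 1 := by
      rw [abs_of_nonneg (Real.rpow_nonneg hξ.1 e)]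
      exact Real.rpow_le_one hξ.1 hξ.2 he0
    have h3 := hK' t ht
    calc |g (x_c + (ξ ^ α) • (c t - x_c))| * |ξ ^ e| *
          |dot2 (c t - x_c) (perp2 (deriv c t)) / ‖c t - x_c‖ ^ β|
        ≤ M₀ * 1 * K :=
          mul_le_mul (mul_le_mul h1 h2 (abs_nonneg _) hM₀0) h3 (abs_nonneg _)
            (mul_nonneg hM₀0 zero_le_one)
      _ = M₀ * K := by ring
  refine ⟨?_, ⟨M₀ * K, hbound⟩⟩
  -- the derivative of φ
  set f' : ℝ × ℝ → (ℝ × ℝ →L[ℝ] ℝ × ℝ) := fun p =>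
    (ContinuousLinearMap.fst ℝ ℝ ℝ).smulRight ((α * p.1 ^ (α - 1)) • (c p.2 - x_c)) +
    (ContinuousLinearMap.snd ℝ ℝ ℝ).smulRight (p.1 ^ α • deriv c p.2) with hf'_def
  have hf' : ∀ p ∈ s, HasFDerivWithinAt φ (f' p) s p := fun p hp =>
    (deriv_aux x_c c α hc p (ne_of_gt hp.1.1)).hasFDerivWithinAt
  -- removing the singular point does not change the integral
  have hTdiff : (∫ x in T, g x / ‖x - x_c‖ ^ β) = ∫ x in T \ {x_c}, g x / ‖x - x_c‖ ^ β := by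
    refine (setIntegral_congr_set ?_).symm
    exact diff_ae_eq_self.mpr (measure_mono_null Set.inter_subset_right
      (measure_singleton x_c))
  -- change of variables
  have hchange : (∫ x in T \ {x_c}, g x / ‖x - x_c‖ ^ β)
      = ∫ p in s, |(f' p).det| • (g (φ p) / ‖φ p - x_c‖ ^ β) := by
    rw [← himage]
    exact integral_image_eq_integral_abs_det_fderiv_smul volume hs_meas hf' hinj _
  set G : ℝ × ℝ → ℝ := fun p =>
    g (x_c + (p.1 ^ α) • (c p.2 - x_c)) * p.1 ^ e *
      (dot2 (c p.2 - x_c) (perp2 (deriv c p.2)) / ‖c p.2 - x_c‖ ^ β) with hG_def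
  -- pointwise identification of the transformed integrand
  have hkey : ∀ p ∈ s, |(f' p).det| • (g (φ p) / ‖φ p - x_c‖ ^ β) = α * G p := by
    rintro ⟨ξ, t⟩ ⟨hξ, ht⟩
    have hξ0 : 0 < ξ := hξ.1
    have hD : 0 ≤ dot2 (c t - x_c) (perp2 (deriv c t)) := hccw t ht
    have hdet : (f' (ξ, t)).det
        = α * (ξ ^ (α - 1) * ξ ^ α) * dot2 (c t - x_c) (perp2 (deriv c t)) := by
      rw [hf'_def, det_aux]
      simp only [dot2, perp2, Prod.smul_fst, Prod.smul_snd, smul_eq_mul,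
        Prod.fst_sub, Prod.snd_sub]
      ring
    have hdet_abs : |(f' (ξ, t)).det| = (f' (ξ, t)).det := by
      rw [abs_of_nonneg]
      rw [hdet]
      have h1 : 0 < ξ ^ (α - 1) * ξ ^ α :=
        mul_pos (Real.rpow_pos_of_pos hξ0 _) (Real.rpow_pos_of_pos hξ0 _)
      positivity
    have hnorm : ‖φ (ξ, t) - x_c‖ ^ β = ξ ^ (α * β) * ‖c t - x_c‖ ^ β := by
      have hv : φ (ξ, t) - x_c = (ξ ^ α) • (c t - x_c) := by
        simp [hφ_def]
      rw [hv, norm_smul, Real.norm_eq_abs, abs_of_nonneg (Real.rpow_nonneg hξ0.le α),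
        Real.mul_rpow (Real.rpow_nonneg hξ0.le α) (norm_nonneg _),
        ← Real.rpow_mul hξ0.le]
    have hsplit : ξ ^ (α - 1) * ξ ^ α = ξ ^ e * ξ ^ (α * β) := by
      rw [← Real.rpow_add hξ0, ← Real.rpow_add hξ0]
      congr 1
      rw [he_def]; ring
    have hne1 : ξ ^ (α * β) ≠ 0 := ne_of_gt (Real.rpow_pos_of_pos hξ0 _)
    have hne2 : ‖c t - x_c‖ ^ β ≠ 0 := ne_of_gt (hnorm_pos t ht)
    rw [smul_eq_mul, hdet_abs, hdet, hnorm, hG_def, hsplit]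
    have hφeq : φ (ξ, t) = x_c + (ξ ^ α) • (c t - x_c) := rfl
    rw [hφeq]
    field_simp
  have hcongr : (∫ p in s, |(f' p).det| • (g (φ p) / ‖φ p - x_c‖ ^ β))
      = ∫ p in s, α * G p :=
    setIntegral_congr_fun hs_meas hkey
  -- continuity of G on s
  have hφcont : Continuous φ :=
    continuous_const.add
      (((Real.continuous_rpow_const hα.le).comp continuous_fst).smul
        ((hc.continuous.comp continuous_snd).sub continuous_const))
  have hGcont : ContinuousOn G s := by
    apply ContinuousOn.mul
    apply ContinuousOn.mul
    · exact hg.comp hφcont.continuousOn fun p hp =>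
        hφT p.1 ⟨hp.1.1.le, hp.1.2⟩ p.2 hp.2
    · exact ((Real.continuous_rpow_const he0).comp continuous_fst).continuousOn
    · exact hQcont.comp continuous_snd.continuousOn fun p hp => hp.2
  have hsfin : volume s < ⊤ :=
    lt_of_le_of_lt
      (measure_mono (Set.prod_mono Set.Ioc_subset_Icc_self subset_rfl))
      ((isCompact_Icc.prod isCompact_Icc).measure_lt_top)
  have hGmeas : AEStronglyMeasurable G (volume.restrict s) :=
    hGcont.aestronglyMeasurable hs_meas
  have hGint : IntegrableOn G s := by
    refine Integrable.mono' (g := fun _ => M₀ * K)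
      (integrableOn_const hsfin.ne) hGmeas ?_
    refine (ae_restrict_iff' hs_meas).2 (ae_of_all _ fun p hp => ?_)
    have := hbound p.1 ⟨hp.1.1.le, hp.1.2⟩ p.2 hp.2
    simpa only [Real.norm_eq_abs, hG_def] using this
  -- Fubini
  have hGint' : Integrable (Function.uncurry fun ξ t => G (ξ, t))
      (((volume : Measure ℝ).restrict (Set.Ioc (0:ℝ) 1)).prod
        ((volume : Measure ℝ).restrict (Set.Icc (0:ℝ) 1))) := by
    rw [Measure.prod_restrict]
    have huncurry : (Function.uncurry fun ξ t => G (ξ, t)) = G := rfl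
    rw [huncurry, ← hs_def, ← Measure.volume_eq_prod]
    exact hGint
  have hfub : (∫ p in s, G p)
      = ∫ t in Set.Icc (0:ℝ) 1, ∫ ξ in Set.Ioc (0:ℝ) 1, G (ξ, t) := by
    have h1 : (∫ p in s, G p)
        = ∫ p in s, G p ∂((volume : Measure ℝ).prod (volume : Measure ℝ)) := by
      rw [← Measure.volume_eq_prod]
    have h2 : (∫ p in s, G p ∂((volume : Measure ℝ).prod (volume : Measure ℝ)))
        = ∫ ξ in Set.Ioc (0:ℝ) 1, ∫ t in Set.Icc (0:ℝ) 1, G (ξ, t) := by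
      rw [hs_def]
      refine setIntegral_prod G ?_
      rw [IntegrableOn, ← Measure.volume_eq_prod]
      exact hGint
    rw [h1, h2]
    exact integral_integral_swap hGint'
  -- assemble
  rw [hTdiff, hchange, hcongr, integral_const_mul, hfub]
  congr 1
  rw [MeasureTheory.integral_Icc_eq_integral_Ioc,
    intervalIntegral.integral_of_le (zero_le_one (α := ℝ))]
  refine setIntegral_congr_fun measurableSet_Ioc fun t ht => ?_
  rw [intervalIntegral.integral_of_le (zero_le_one (α := ℝ))]
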